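/- Let Π = (π_1,…,π_ℓ) be permutations of [k], let f : ({0,1}^n)^k → {0,1}, let S be a Π-repetitive set, and let Q_{π_1},…,Q_{π_ℓ} be oblivious protocols computing f in MYOPIC_{π_1},…,MYOPIC_{π_ℓ} respectively, all with the same communication pattern: for each t ∈ [k−1] there is a number L(t) such that in every protocol Q_{π_u} and on every input, the message sent at step t (from P_{π_u(t)} to P_{π_u(t+1)}) has length exactly L(t). Then D^NOF(f^ℓ) ≤ ℓ·C + ℓ − Σ_{(t,s,U)∈S} (|U|−1)·L(t), where C = Σ_{t=1}^{k−1} L(t) is the cost of Q_{π_1}. -/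

import Mathlib

/-!  Deterministic `k`-party Number-On-the-Forehead (NOF) blackboard protocols.
Inputs come from a type `X`; party `P_i` sees every input except its own, which is
modelled by giving each party the "erased" input vector `NOFview i x` (its own
coordinate replaced by `none`).  At each step the speaker (determined by the
transcript written so far on the shared board) writes one bit, depending on the
transcript and on the inputs it sees.  After `P.T` steps every party must be able
to determine the required output from the transcript and the inputs it sees. -/
structure NOFProtocol (k : ℕ) (X O : Type) where
  /-- number of bits written on the board (the cost of the protocol) -/
  T : ℕ
  /-- who speaks next, as a function of the transcript -/
  speaker : List Bool → Fin k
  /-- the bit written by the speaker: a function of the transcript and of the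
  inputs the speaker sees -/
  nextBit : List Bool → (Fin k → Option X) → Bool
  /-- how party `i` determines the output from the final transcript and the
  inputs it sees -/
  out : Fin k → List Bool → (Fin k → Option X) → O

/-- What party `i` sees in the NOF model: every input except its own. -/
def NOFview {k : ℕ} {X : Type} (i : Fin k) (x : Fin k → X) : Fin k → Option X :=
  fun j => if j = i then none else some (x j)

/-- The transcript on the board after `t` steps. -/
def NOFrun {k : ℕ} {X O : Type} (P : NOFProtocol k X O) (x : Fin k → X) : ℕ → List Bool
  | 0 => []
  | t + 1 => NOFrun P x t ++ [P.nextBit (NOFrun P x t) (NOFview (P.speaker (NOFrun P x t)) x)]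

/-- `P` computes `F` if, on every input, every party determines `F x` from the
final transcript and the inputs it sees. -/
def NOFComputes {k : ℕ} {X O : Type} (P : NOFProtocol k X O) (F : (Fin k → X) → O) : Prop :=
  ∀ x i, P.out i (NOFrun P x P.T) (NOFview i x) = F x

/-- Deterministic NOF communication complexity: the least cost of a protocol computing `F`. -/
noncomputable def DNOF (k : ℕ) (X O : Type) (F : (Fin k → X) → O) : ℕ :=
  sInf {c | ∃ P : NOFProtocol k X O, P.T = c ∧ NOFComputes P F}

/-- The `ℓ`-fold direct sum `f^ℓ`: party `j` holds the `ℓ` inputs `x j 0, …, x j (ℓ-1)`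
on its forehead, and all `ℓ` values `f` on the respective instances must be computed. -/
def directSum {k n : ℕ} (ℓ : ℕ) (f : (Fin k → (Fin n → Bool)) → Bool) :
    (Fin k → (Fin ℓ → Fin n → Bool)) → (Fin ℓ → Bool) :=
  fun x u => f fun j => x j u

/-!  The myopic one-way model `MYOPIC_π`.  The parties speak one-way in the order
`π(1),…,π(k)` (here positions are 0-based: at step `t ∈ {0,…,k-2}` the party at
position `t`, i.e. `π(t)`, sends a single message to the party at position `t+1`,
and the party at position `k-1` announces the output).  The party at position `t`
sees only the inputs of the previous parties (positions `< t`) and of the next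
party (position `t+1`), and its message depends only on these inputs and on the
message it received. -/
structure MyoProtocol (k : ℕ) (X O : Type) where
  /-- `msg t prev view`: the message sent at step `t` by the party at position `t`
  to the party at position `t+1`, given the message `prev` it received and the
  inputs `view` it sees. -/
  msg : ℕ → List Bool → (Fin k → Option X) → List Bool
  /-- the output announced by the last party, from the message it received and the
  inputs it sees -/
  out : List Bool → (Fin k → Option X) → O

/-- What the party at position `t` in the order `π` sees: the inputs of the parties
at positions `< t` and of the party at position `t+1`. -/
def myoView {k : ℕ} {X : Type} (π : Equiv.Perm (Fin k)) (t : ℕ) (x : Fin k → X) :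
    Fin k → Option X :=
  fun j => if ((π.symm j : ℕ) < t ∨ (π.symm j : ℕ) = t + 1) then some (x j) else none

/-- `myoMsg π P x t`: the message sent at step `t` when running `P` on input `x`
in the order `π`. -/
def myoMsg {k : ℕ} {X O : Type} (π : Equiv.Perm (Fin k)) (P : MyoProtocol k X O)
    (x : Fin k → X) : ℕ → List Bool
  | 0 => P.msg 0 [] (myoView π 0 x)
  | t + 1 => P.msg (t + 1) (myoMsg π P x t) (myoView π (t + 1) x)

/-- `P` computes `F` in `MYOPIC_π`: the last party announces `F x` on every input. -/
def MyoComputes {k : ℕ} {X O : Type} (π : Equiv.Perm (Fin k)) (P : MyoProtocol k X O)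
    (F : (Fin k → X) → O) : Prop :=
  ∀ x, P.out (myoMsg π P x (k - 2)) (myoView π (k - 1) x) = F x

/-- A triplet `(t, s, U)` is `Π`-binding (Definition 11 of the paper, with 0-based
steps `t`): (1) in every `π_u`, `u ∈ U`, party `s` is at position `t`; (2) the
parties at position `t+1` in the orders `π_u`, `u ∈ U`, are pairwise distinct
(`|{π_u(t+1) : u ∈ U}| = |U|`); (3) no party appearing at a position `< t` in some
`π_u`, `u ∈ U`, is at position `t+1` in some `π_{u'}`, `u' ∈ U`. -/
def IsBinding (k ℓ : ℕ) (πs : Fin ℓ → Equiv.Perm (Fin k))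
    (t : ℕ) (s : Fin k) (U : Finset (Fin ℓ)) : Prop :=
  t + 1 < k ∧
    (∀ u ∈ U, ((πs u).symm s : ℕ) = t) ∧
    (∀ u ∈ U, ∀ u' ∈ U, ∀ p : Fin k,
      ((πs u).symm p : ℕ) = t + 1 → ((πs u').symm p : ℕ) = t + 1 → u = u') ∧
    ∀ u ∈ U, ∀ u' ∈ U, ∀ p : Fin k,
      ((πs u).symm p : ℕ) < t → ((πs u').symm p : ℕ) ≠ t + 1

/-- A `Π`-repetitive set (Definition 12 of the paper): a set of `Π`-binding triplets
such that for all distinct `(t₁,s₁,U₁), (t₂,s₂,U₂)` in the set: `s₁` is not at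
position `t₂+1` in any `π_u`, `u ∈ U₂`, and if `(t₁,s₁) = (t₂,s₂)` then
`U₁ ∩ U₂ = ∅`. -/
def IsRepetitive (k ℓ : ℕ) (πs : Fin ℓ → Equiv.Perm (Fin k))
    (S : Finset (ℕ × Fin k × Finset (Fin ℓ))) : Prop :=
  (∀ s ∈ S, IsBinding k ℓ πs s.1 s.2.1 s.2.2) ∧
    ∀ s ∈ S, ∀ s' ∈ S, s ≠ s' →
      (∀ u ∈ s'.2.2, ((πs u).symm s.2.1 : ℕ) ≠ s'.1 + 1) ∧
      ((s.1, s.2.1) = (s'.1, s'.2.1) → s.2.2 ∩ s'.2.2 = ∅)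

namespace NOFAux

lemma NOFrun_length {k : ℕ} {X O : Type} (P : NOFProtocol k X O) (x : Fin k → X) (t : ℕ) :
    (NOFrun P x t).length = t := by
  induction t with
  | zero => rfl
  | succ t ih => simp [NOFrun, ih]

lemma NOFrun_congr {k : ℕ} {X O : Type} (P P' : NOFProtocol k X O) (x : Fin k → X) (T0 : ℕ)
    (hspk : ∀ ts : List Bool, ts.length < T0 → P.speaker ts = P'.speaker ts)
    (hnxt : ∀ ts v, ts.length < T0 → P.nextBit ts v = P'.nextBit ts v) :
    ∀ t ≤ T0, NOFrun P x t = NOFrun P' x t := by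
  intro t ht
  induction t with
  | zero => rfl
  | succ t ih =>
    have h1 : t ≤ T0 := Nat.le_of_succ_le ht
    have e := ih h1
    have hl : (NOFrun P' x t).length < T0 := by rw [NOFrun_length]; omega
    show NOFrun P x t ++ _ = NOFrun P' x t ++ _
    rw [e, hspk _ hl, hnxt _ _ hl]

/-- a round: a designated speaker together with a function computing the message it
writes from the board so far and the inputs it sees. -/
abbrev Rnd (k : ℕ) (X : Type) := Fin k × (List Bool → (Fin k → Option X) → List Bool)

def buildFrom {k : ℕ} {X : Type} (x : Fin k → X) : List (Rnd k X) → List Bool → List Bool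
  | [], acc => acc
  | r :: rs, acc => buildFrom x rs (acc ++ r.2 acc (NOFview r.1 x))

lemma buildFrom_append {k : ℕ} {X : Type} (x : Fin k → X) (rs₁ rs₂ : List (Rnd k X))
    (acc : List Bool) :
    buildFrom x (rs₁ ++ rs₂) acc = buildFrom x rs₂ (buildFrom x rs₁ acc) := by
  induction rs₁ generalizing acc with
  | nil => rfl
  | cons r rs ih => simp [buildFrom, ih]

lemma exists_run {k : ℕ} {X O : Type} (d : Fin k) (rs : List (Rnd k X))
    (hlen : ∀ r ∈ rs, ∃ c, ∀ a v, (r.2 a v).length = c) :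
    ∃ (T : ℕ) (spk : List Bool → Fin k) (nxt : List Bool → (Fin k → Option X) → Bool),
      (∀ x : Fin k → X, (buildFrom x rs []).length = T) ∧
      ∀ (out : Fin k → List Bool → (Fin k → Option X) → O) (x : Fin k → X),
        NOFrun ⟨T, spk, nxt, out⟩ x T = buildFrom x rs [] := by
  induction rs using List.reverseRecOn with
  | nil =>
    exact ⟨0, fun _ => d, fun _ _ => false, fun _ => rfl, fun _ _ => rfl⟩
  | append_singleton rs r ih =>
    obtain ⟨T0, spk0, nxt0, hT0, hrun0⟩ := ih (fun r hr => hlen r (by simp [hr]))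
    obtain ⟨c, hc⟩ := hlen r (by simp)
    refine ⟨T0 + c,
      (fun ts => if ts.length < T0 then spk0 ts else r.1),
      (fun ts v => if ts.length < T0 then nxt0 ts v else
        (r.2 (ts.take T0) v).getD (ts.length - T0) false), ?_, ?_⟩
    · intro x
      rw [buildFrom_append]
      show (buildFrom x rs [] ++ r.2 _ _).length = T0 + c
      rw [List.length_append, hT0, hc]
    · intro out x
      set B0 := buildFrom x rs [] with hB0
      have hB0len : B0.length = T0 := hT0 x
      set M := r.2 B0 (NOFview r.1 x) with hM
      have hMlen : M.length = c := hc _ _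
      set P' : NOFProtocol k X O := ⟨T0 + c,
        (fun ts => if ts.length < T0 then spk0 ts else r.1),
        (fun ts v => if ts.length < T0 then nxt0 ts v else
          (r.2 (ts.take T0) v).getD (ts.length - T0) false), out⟩ with hP'
      have hbase : NOFrun P' x T0 = B0 := by
        have := NOFrun_congr P' ⟨T0, spk0, nxt0, out⟩ x T0
          (fun ts hts => by simp [hP', hts])
          (fun ts v hts => by simp [hP', hts]) T0 le_rfl
        rw [this]
        exact hrun0 out x
      have hstep : ∀ m, m ≤ c → NOFrun P' x (T0 + m) = B0 ++ M.take m := by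
        intro m hm
        induction m with
        | zero => simpa using hbase
        | succ m ih2 =>
          have him := ih2 (Nat.le_of_succ_le hm)
          have hlen2 : (NOFrun P' x (T0 + m)).length = T0 + m := NOFrun_length _ _ _
          have hrw : NOFrun P' x (T0 + (m+1)) = NOFrun P' x (T0+m) ++
              [P'.nextBit (NOFrun P' x (T0+m)) (NOFview (P'.speaker (NOFrun P' x (T0+m))) x)] := rfl
          rw [hrw, him]
          have hnotlt : ¬ (B0 ++ M.take m).length < T0 := by
            rw [List.length_append, hB0len]; omega
          have hspk : P'.speaker (B0 ++ M.take m) = r.1 := by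
            simp only [hP']
            exact if_neg hnotlt
          rw [hspk]
          have htake : (B0 ++ M.take m).take T0 = B0 := by
            rw [← hB0len]; exact List.take_left
          have hlen3 : (B0 ++ M.take m).length = T0 + m := by
            rw [List.length_append, hB0len, List.length_take]
            omega
          have hbit : P'.nextBit (B0 ++ M.take m) (NOFview r.1 x) = M.getD m false := by
            simp only [hP']
            rw [if_neg hnotlt, htake, hlen3, ← hM]
            congr 1
            omega
          rw [hbit]
          have hmc : m < M.length := by omega
          rw [List.getD_eq_getElem _ _ hmc, List.take_succ,
            List.getElem?_eq_getElem hmc]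
          simp [List.append_assoc]
      have := hstep c le_rfl
      rw [buildFrom_append]
      show NOFrun P' x (T0 + c) = buildFrom x [r] B0
      rw [this]
      show B0 ++ M.take c = buildFrom x [r] B0
      rw [← hMlen, List.take_length]
      rfl

end NOFAux

namespace NOFSim

open NOFAux

abbrev XX (ℓ n : ℕ) := Fin ℓ → Fin n → Bool

def inst {k ℓ n : ℕ} (x : Fin k → XX ℓ n) (u : Fin ℓ) : Fin k → (Fin n → Bool) :=
  fun j => x j u

structure Ctx (k ℓ n : ℕ) where
  πs : Fin ℓ → Equiv.Perm (Fin k)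
  Q : Fin ℓ → MyoProtocol k (Fin n → Bool) Bool
  S : Finset (ℕ × Fin k × Finset (Fin ℓ))
  L : ℕ → ℕ

variable {k ℓ n : ℕ}

def Ctx.mm (C : Ctx k ℓ n) (u : Fin ℓ) (x : Fin k → XX ℓ n) (t : ℕ) : List Bool :=
  myoMsg (C.πs u) (C.Q u) (inst x u) t

def Ctx.Supp (C : Ctx k ℓ n) (t : ℕ) (u : Fin ℓ) : Prop :=
  ∃ p : Fin k × Finset (Fin ℓ), (t, p.1, p.2) ∈ C.S ∧ u ∈ p.2

noncomputable def Ctx.sOf (C : Ctx k ℓ n) {t : ℕ} {u : Fin ℓ} (h : C.Supp t u) : Fin k :=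
  h.choose.1

noncomputable def Ctx.UOf (C : Ctx k ℓ n) {t : ℕ} {u : Fin ℓ} (h : C.Supp t u) :
    Finset (Fin ℓ) := h.choose.2

lemma Ctx.UOf_spec (C : Ctx k ℓ n) {t : ℕ} {u : Fin ℓ} (h : C.Supp t u) :
    (t, C.sOf h, C.UOf h) ∈ C.S ∧ u ∈ C.UOf h := h.choose_spec

noncomputable def Ctx.repOf (C : Ctx k ℓ n) {t : ℕ} {u : Fin ℓ} (h : C.Supp t u) : Fin ℓ :=
  (C.UOf h).min' ⟨u, (C.UOf_spec h).2⟩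

def Ctx.suppNR (C : Ctx k ℓ n) (t : ℕ) (u : Fin ℓ) : Prop :=
  ∃ p : Fin k × Finset (Fin ℓ), (t, p.1, p.2) ∈ C.S ∧ u ∈ p.2 ∧ ¬ ∀ u' ∈ p.2, u ≤ u'

open Classical in
noncomputable def Ctx.slotLen (C : Ctx k ℓ n) (t : ℕ) (u : Fin ℓ) : ℕ :=
  if C.suppNR t u then 0 else C.L t

noncomputable def Ctx.stepLen (C : Ctx k ℓ n) (t : ℕ) : ℕ :=
  ((List.finRange ℓ).map (C.slotLen t)).sum

open Classical in
noncomputable def Ctx.slotPos (C : Ctx k ℓ n) (t : ℕ) (u : Fin ℓ) : ℕ :=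
  ((List.range t).map C.stepLen).sum + (((List.finRange ℓ).take u).map (C.slotLen t)).sum

def Ctx.viewAt (C : Ctx k ℓ n) (v : Fin k → Option (XX ℓ n)) (u : Fin ℓ) (t : ℕ) :
    Fin k → Option (Fin n → Bool) :=
  fun j => if (((C.πs u).symm j : ℕ) < t ∨ ((C.πs u).symm j : ℕ) = t + 1)
    then (v j).map (fun g => g u) else none

def toZ (b : Bool) : ZMod 2 := if b then 1 else 0

open Classical in
noncomputable def Ctx.RecCore (C : Ctx k ℓ n) (t : ℕ)
    (prevRec : Fin ℓ → List Bool → (Fin k → Option (XX ℓ n)) → List Bool)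
    (u : Fin ℓ) (ts : List Bool) (v : Fin k → Option (XX ℓ n)) : List Bool :=
  if h : C.Supp t u then
    (List.range (C.L t)).map fun i =>
      decide ((toZ (((ts.drop (C.slotPos t (C.repOf h))).take (C.L t)).getD i false)
        + ∑ u' ∈ (C.UOf h).erase u,
            toZ (((C.Q u').msg t (prevRec u' ts v) (C.viewAt v u' t)).getD i false)) = 1)
  else (ts.drop (C.slotPos t u)).take (C.L t)

noncomputable def Ctx.Rec (C : Ctx k ℓ n) :
    ℕ → Fin ℓ → List Bool → (Fin k → Option (XX ℓ n)) → List Bool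
  | 0 => C.RecCore 0 (fun _ _ _ => [])
  | (t+1) => C.RecCore (t+1) (C.Rec t)

noncomputable def Ctx.prevOf (C : Ctx k ℓ n) :
    ℕ → Fin ℓ → List Bool → (Fin k → Option (XX ℓ n)) → List Bool
  | 0 => fun _ _ _ => []
  | (t+1) => C.Rec t

lemma Ctx.Rec_eq (C : Ctx k ℓ n) (t : ℕ) : C.Rec t = C.RecCore t (C.prevOf t) := by
  cases t <;> rfl

noncomputable def Ctx.Gnorm (C : Ctx k ℓ n) (t : ℕ) (u : Fin ℓ) (ts : List Bool)
    (v : Fin k → Option (XX ℓ n)) : List Bool :=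
  (C.Q u).msg t (C.prevOf t u ts v) (C.viewAt v u t)

def padTo (c : ℕ) (l : List Bool) : List Bool := (l ++ List.replicate c false).take c

lemma padTo_length (c : ℕ) (l : List Bool) : (padTo c l).length = c := by
  simp [padTo]

lemma padTo_eq {c : ℕ} {l : List Bool} (h : l.length = c) : padTo c l = l := by
  rw [padTo, ← h, List.take_left]

open Classical in
noncomputable def Ctx.slotG (C : Ctx k ℓ n) (t : ℕ) (u : Fin ℓ) :
    List Bool → (Fin k → Option (XX ℓ n)) → List Bool :=
  if h : C.Supp t u then
    (if u = C.repOf h then fun ts v =>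
      (List.range (C.L t)).map fun i =>
        decide ((∑ u' ∈ C.UOf h, toZ ((C.Gnorm t u' ts v).getD i false)) = 1)
     else fun _ _ => [])
  else fun ts v => padTo (C.L t) (C.Gnorm t u ts v)

open Classical in
noncomputable def Ctx.slotP (C : Ctx k ℓ n) (hk : 0 < k) (t : ℕ) (u : Fin ℓ) : Fin k :=
  if h : C.Supp t u then C.sOf h else C.πs u ⟨t % k, Nat.mod_lt _ hk⟩

open Classical in
noncomputable def Ctx.trueSlot (C : Ctx k ℓ n) (x : Fin k → XX ℓ n) (t : ℕ) (u : Fin ℓ) :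
    List Bool :=
  if h : C.Supp t u then
    (if u = C.repOf h then
      (List.range (C.L t)).map fun i =>
        decide ((∑ u' ∈ C.UOf h, toZ ((C.mm u' x t).getD i false)) = 1)
     else [])
  else C.mm u x t

noncomputable def Ctx.trueStep (C : Ctx k ℓ n) (x : Fin k → XX ℓ n) (t : ℕ) : List Bool :=
  (List.finRange ℓ).flatMap (C.trueSlot x t)

noncomputable def Ctx.trueBoard (C : Ctx k ℓ n) (x : Fin k → XX ℓ n) (t : ℕ) : List Bool :=
  ((List.range t).map (C.trueStep x)).flatten

lemma Ctx.trueBoard_succ (C : Ctx k ℓ n) (x : Fin k → XX ℓ n) (t : ℕ) :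
    C.trueBoard x (t+1) = C.trueBoard x t ++ C.trueStep x t := by
  simp [Ctx.trueBoard, List.range_succ]

lemma Ctx.trueBoard_prefix (C : Ctx k ℓ n) (x : Fin k → XX ℓ n) {a b : ℕ} (h : a ≤ b) :
    C.trueBoard x a <+: C.trueBoard x b := by
  induction b with
  | zero => simp [Nat.le_zero.mp h]
  | succ b ih =>
    rcases Nat.lt_or_ge a (b+1) with hb | hb
    · exact (ih (by omega)).trans (by rw [Ctx.trueBoard_succ]; exact List.prefix_append _ _)
    · have : a = b + 1 := by omega
      subst this; exact List.prefix_rfl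

end NOFSim

namespace NOFSim

open NOFAux

variable {k ℓ n : ℕ}

lemma Ctx.triplet_unique (C : Ctx k ℓ n) (hS : IsRepetitive k ℓ C.πs C.S)
    {t : ℕ} {s s' : Fin k} {U U' : Finset (Fin ℓ)} {u : Fin ℓ}
    (h1 : (t, s, U) ∈ C.S) (h2 : (t, s', U') ∈ C.S) (hu : u ∈ U) (hu' : u ∈ U') :
    s = s' ∧ U = U' := by
  have b1 := (hS.1 _ h1).2.1 u hu
  have b2 := (hS.1 _ h2).2.1 u hu'
  have hs : s = s' := (C.πs u).symm.injective (Fin.ext (by rw [b1, b2]))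
  subst hs
  refine ⟨rfl, ?_⟩
  by_contra hne
  have hne' : ((t, s, U) : ℕ × Fin k × Finset (Fin ℓ)) ≠ (t, s, U') := by simp [hne]
  have hint := (hS.2 _ h1 _ h2 hne').2 rfl
  exact Finset.notMem_empty u (hint ▸ Finset.mem_inter.mpr ⟨hu, hu'⟩)

lemma Ctx.prev_unsupp (C : Ctx k ℓ n) (hS : IsRepetitive k ℓ C.πs C.S)
    {t : ℕ} {s : Fin k} {U : Finset (Fin ℓ)} {u : Fin ℓ}
    (hm : (t + 1, s, U) ∈ C.S) (hu : u ∈ U) : ¬ C.Supp t u := by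
  rintro ⟨⟨s', U'⟩, hm', hu'⟩
  have hne : ((t + 1, s, U) : ℕ × Fin k × Finset (Fin ℓ)) ≠ (t, s', U') := by simp
  exact (hS.2 _ hm _ hm' hne).1 u hu' ((hS.1 _ hm).2.1 u hu)

lemma Ctx.not_suppNR_of_rep (C : Ctx k ℓ n) (hS : IsRepetitive k ℓ C.πs C.S)
    {t : ℕ} {u : Fin ℓ} (h : C.Supp t u) (hrep : u = C.repOf h) : ¬ C.suppNR t u := by
  rintro ⟨⟨s', U'⟩, hm', hu', hnm⟩
  obtain ⟨-, hU⟩ := C.triplet_unique hS (C.UOf_spec h).1 hm' (C.UOf_spec h).2 hu'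
  apply hnm
  intro u' hu''
  rw [hrep, Ctx.repOf]
  exact Finset.min'_le _ _ (hU ▸ hu'')

lemma Ctx.suppNR_of_nonrep (C : Ctx k ℓ n) {t : ℕ} {u : Fin ℓ}
    (h : C.Supp t u) (hrep : u ≠ C.repOf h) : C.suppNR t u := by
  refine ⟨(C.sOf h, C.UOf h), (C.UOf_spec h).1, (C.UOf_spec h).2, fun hmin => hrep ?_⟩
  exact le_antisymm (hmin _ (Finset.min'_mem _ _)) (Finset.min'_le _ _ (C.UOf_spec h).2)

lemma Ctx.not_suppNR_of_not_supp (C : Ctx k ℓ n) {t : ℕ} {u : Fin ℓ}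
    (h : ¬ C.Supp t u) : ¬ C.suppNR t u := fun ⟨p, h1, h2, _⟩ => h ⟨p, h1, h2⟩

open Classical in
lemma Ctx.slotLen_of_rep (C : Ctx k ℓ n) (hS : IsRepetitive k ℓ C.πs C.S)
    {t : ℕ} {u : Fin ℓ} (h : C.Supp t u) (hrep : u = C.repOf h) :
    C.slotLen t u = C.L t := if_neg (C.not_suppNR_of_rep hS h hrep)

open Classical in
lemma Ctx.slotLen_of_nonrep (C : Ctx k ℓ n) {t : ℕ} {u : Fin ℓ}
    (h : C.Supp t u) (hrep : u ≠ C.repOf h) : C.slotLen t u = 0 :=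
  if_pos (C.suppNR_of_nonrep h hrep)

open Classical in
lemma Ctx.slotLen_of_unsupp (C : Ctx k ℓ n) {t : ℕ} {u : Fin ℓ}
    (h : ¬ C.Supp t u) : C.slotLen t u = C.L t := if_neg (C.not_suppNR_of_not_supp h)

section Lengths

variable (C : Ctx k ℓ n) (hS : IsRepetitive k ℓ C.πs C.S)
  (hobl : ∀ (u : Fin ℓ) (x : Fin k → (Fin n → Bool)) (t : ℕ), t < k - 1 →
    (myoMsg (C.πs u) (C.Q u) x t).length = C.L t)

include hobl in
lemma Ctx.len_mm {u : Fin ℓ} {x : Fin k → XX ℓ n} {t : ℕ} (ht : t < k - 1) :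
    (C.mm u x t).length = C.L t := hobl u _ t ht

include hS hobl in
lemma Ctx.len_trueSlot {x : Fin k → XX ℓ n} {t : ℕ} {u : Fin ℓ} (ht : t < k - 1) :
    (C.trueSlot x t u).length = C.slotLen t u := by
  rw [Ctx.trueSlot]
  by_cases h : C.Supp t u
  · rw [dif_pos h]
    by_cases hrep : u = C.repOf h
    · rw [if_pos hrep, C.slotLen_of_rep hS h hrep]
      simp
    · rw [if_neg hrep, C.slotLen_of_nonrep h hrep]
      rfl
  · rw [dif_neg h, C.slotLen_of_unsupp h]
    exact C.len_mm hobl ht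

include hS hobl in
lemma Ctx.len_trueStep {x : Fin k → XX ℓ n} {t : ℕ} (ht : t < k - 1) :
    (C.trueStep x t).length = C.stepLen t := by
  rw [Ctx.trueStep, List.length_flatMap, Ctx.stepLen]
  exact congrArg List.sum
    (List.map_congr_left (fun a _ => by
      simpa [Function.comp] using C.len_trueSlot hS hobl (u := a) ht))

include hS hobl in
lemma Ctx.len_trueBoard {x : Fin k → XX ℓ n} {t : ℕ} (ht : t ≤ k - 1) :
    (C.trueBoard x t).length = ((List.range t).map C.stepLen).sum := by
  rw [Ctx.trueBoard, List.length_flatten, List.map_map]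
  exact congrArg List.sum
    (List.map_congr_left (fun a ha => by
      have : a < t := List.mem_range.mp ha
      simpa [Function.comp] using C.len_trueStep hS hobl (x := x) (t := a) (by omega)))

end Lengths

lemma flatMap_drop_take {α β : Type*} (l : List α) (g : α → List β) (i : ℕ)
    (hi : i < l.length) :
    ((l.flatMap g).drop (((l.take i).map (fun a => (g a).length)).sum)).take (g l[i]).length
      = g l[i] := by
  have h1 : l.flatMap g = (l.take i).flatMap g ++ (g l[i] ++ (l.drop (i + 1)).flatMap g) := by
    conv_lhs => rw [← List.take_append_drop i l]
    rw [List.flatMap_append, List.drop_eq_getElem_cons hi, List.flatMap_cons]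
  rw [h1]
  have hlen : ((l.take i).map (fun a => (g a).length)).sum = ((l.take i).flatMap g).length := by
    rw [List.length_flatMap]
  rw [hlen, List.drop_left, List.take_left]

lemma read_of_prefix {a ts seg : List Bool} {p c : ℕ} (hpre : a <+: ts)
    (hread : (a.drop p).take c = seg) (hlen : seg.length = c) :
    (ts.drop p).take c = seg := by
  rcases Nat.eq_zero_or_pos c with hc | hc
  · subst hc
    simp [List.length_eq_zero_iff.mp hlen]
  · obtain ⟨r, rfl⟩ := hpre
    have hdroplen : c ≤ (a.drop p).length := by
      have := congrArg List.length hread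
      rw [List.length_take, hlen] at this
      omega
    have hp : p ≤ a.length := by
      rw [List.length_drop] at hdroplen
      omega
    rw [List.drop_append_of_le_length hp, List.take_append_of_le_length hdroplen, hread]

section Segments

variable (C : Ctx k ℓ n) (hS : IsRepetitive k ℓ C.πs C.S)
  (hobl : ∀ (u : Fin ℓ) (x : Fin k → (Fin n → Bool)) (t : ℕ), t < k - 1 →
    (myoMsg (C.πs u) (C.Q u) x t).length = C.L t)

include hS hobl in
lemma Ctx.seg_slot {x : Fin k → XX ℓ n} {t : ℕ} {u : Fin ℓ} (ht : t < k - 1) :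
    ((C.trueBoard x (t + 1)).drop (C.slotPos t u)).take (C.slotLen t u)
      = C.trueSlot x t u := by
  rw [C.trueBoard_succ x t, Ctx.slotPos]
  have hblen : (C.trueBoard x t).length = ((List.range t).map C.stepLen).sum :=
    C.len_trueBoard hS hobl (by omega)
  rw [← hblen, List.drop_length_add_append]
  rw [Ctx.trueStep]
  have hfin : (u : ℕ) < (List.finRange ℓ).length := by
    rw [List.length_finRange]; exact u.isLt
  have hget : (List.finRange ℓ)[(u : ℕ)] = u := by
    rw [List.getElem_finRange]
    exact Fin.ext (by simp)
  have hmain := flatMap_drop_take (List.finRange ℓ) (C.trueSlot x t) u hfin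
  rw [hget] at hmain
  have hmap : ((List.finRange ℓ).take (u : ℕ)).map (fun a => (C.trueSlot x t a).length)
      = ((List.finRange ℓ).take (u : ℕ)).map (C.slotLen t) :=
    List.map_congr_left (fun a _ => C.len_trueSlot hS hobl ht)
  rw [hmap, C.len_trueSlot hS hobl ht] at hmain
  exact hmain

include hS hobl in
lemma Ctx.read_slot {x : Fin k → XX ℓ n} {t : ℕ} {u : Fin ℓ} {ts : List Bool}
    (ht : t < k - 1) (hpre : C.trueBoard x (t + 1) <+: ts) :
    (ts.drop (C.slotPos t u)).take (C.slotLen t u) = C.trueSlot x t u :=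
  read_of_prefix hpre (C.seg_slot hS hobl ht) (C.len_trueSlot hS hobl ht)

end Segments

end NOFSim

namespace NOFSim

open NOFAux

variable {k ℓ n : ℕ}

lemma getD_map_range {c i : ℕ} (f : ℕ → Bool) (hi : i < c) :
    ((List.range c).map f).getD i false = f i := by
  rw [List.getD_eq_getElem _ _ (by simpa using hi)]
  simp

lemma map_range_getD {l : List Bool} {c : ℕ} (h : l.length = c) :
    (List.range c).map (fun i => l.getD i false) = l := by
  apply List.ext_getElem (by simp [h])
  intro i h1 h2
  simp only [List.getElem_map, List.getElem_range]
  exact List.getD_eq_getElem l false h2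

lemma toZ_decide (z : ZMod 2) : toZ (decide (z = 1)) = z := by
  fin_cases z <;> rfl

lemma decide_toZ (b : Bool) : decide (toZ b = 1) = b := by cases b <;> simp [toZ]

lemma Ctx.viewAt_eq (C : Ctx k ℓ n) {x : Fin k → XX ℓ n} {p : Fin k} {u : Fin ℓ} {t : ℕ}
    (hp : ¬ (((C.πs u).symm p : ℕ) < t ∨ ((C.πs u).symm p : ℕ) = t + 1)) :
    C.viewAt (NOFview p x) u t = myoView (C.πs u) t (inst x u) := by
  funext j
  rw [Ctx.viewAt, myoView]
  by_cases hj : (((C.πs u).symm j : ℕ) < t ∨ ((C.πs u).symm j : ℕ) = t + 1)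
  · rw [if_pos hj, if_pos hj, NOFview]
    have hjp : j ≠ p := fun e => hp (e ▸ hj)
    rw [if_neg hjp]
    rfl
  · rw [if_neg hj, if_neg hj]

lemma Ctx.repOf_eq (C : Ctx k ℓ n) (hS : IsRepetitive k ℓ C.πs C.S)
    {t : ℕ} {u u' : Fin ℓ} (h : C.Supp t u) (h' : C.Supp t u') (hmem : u' ∈ C.UOf h) :
    C.UOf h' = C.UOf h ∧ C.sOf h' = C.sOf h ∧ C.repOf h' = C.repOf h := by
  obtain ⟨hs, hU⟩ :=
    C.triplet_unique hS (C.UOf_spec h').1 (C.UOf_spec h).1 (C.UOf_spec h').2 hmem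
  refine ⟨hU, hs, ?_⟩
  rw [Ctx.repOf, Ctx.repOf]
  exact le_antisymm
    (Finset.min'_le _ _ (by rw [hU]; exact Finset.min'_mem _ _))
    (Finset.min'_le _ _ (by rw [← hU]; exact Finset.min'_mem _ _))

section Correct

variable (C : Ctx k ℓ n) (hS : IsRepetitive k ℓ C.πs C.S)
  (hobl : ∀ (u : Fin ℓ) (x : Fin k → (Fin n → Bool)) (t : ℕ), t < k - 1 →
    (myoMsg (C.πs u) (C.Q u) x t).length = C.L t)

include hS hobl in
lemma Ctx.Gnorm_correct {t : ℕ} (ht : t < k - 1) {u : Fin ℓ} {x : Fin k → XX ℓ n} {ts : List Bool} {p : Fin k}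
    (hprev : ∀ t', t = t' + 1 → ¬ C.Supp t' u)
    (hpre : C.trueBoard x t <+: ts)
    (hp : ¬ (((C.πs u).symm p : ℕ) < t ∨ ((C.πs u).symm p : ℕ) = t + 1)) :
    C.Gnorm t u ts (NOFview p x) = C.mm u x t := by
  rw [Ctx.Gnorm, C.viewAt_eq hp]
  cases t with
  | zero => rfl
  | succ t' =>
    have hns : ¬ C.Supp t' u := hprev t' rfl
    have hprev2 : C.prevOf (t' + 1) u ts (NOFview p x) = C.mm u x t' := by
      show C.Rec t' u ts _ = _
      rw [C.Rec_eq, Ctx.RecCore, dif_neg hns]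
      have hrd := C.read_slot hS hobl (t := t') (u := u) (by omega) hpre
      rwa [C.slotLen_of_unsupp hns, Ctx.trueSlot, dif_neg hns] at hrd
    rw [hprev2]
    rfl

include hS hobl in
lemma Ctx.Rec_correct {t : ℕ} (ht : t < k - 1) (ht2 : t + 1 < k) {u : Fin ℓ}
    {x : Fin k → XX ℓ n} {ts : List Bool}
    (hpre : C.trueBoard x (t + 1) <+: ts) :
    C.Rec t u ts (NOFview (C.πs u ⟨t + 1, ht2⟩) x) = C.mm u x t := by
  rw [C.Rec_eq, Ctx.RecCore]
  by_cases h : C.Supp t u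
  · rw [dif_pos h]
    obtain ⟨hmem, humem⟩ := C.UOf_spec h
    have hrepmem : C.repOf h ∈ C.UOf h := Finset.min'_mem _ _
    have hsupp' : C.Supp t (C.repOf h) := ⟨(C.sOf h, C.UOf h), hmem, hrepmem⟩
    obtain ⟨hU', hs', hr'⟩ := C.repOf_eq hS h hsupp' hrepmem
    have hread : (ts.drop (C.slotPos t (C.repOf h))).take (C.L t)
        = (List.range (C.L t)).map
            (fun i => decide ((∑ u' ∈ C.UOf h, toZ ((C.mm u' x t).getD i false)) = 1)) := by
      have hrd := C.read_slot hS hobl (t := t) (u := C.repOf h) ht hpre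
      rw [C.slotLen_of_rep hS hsupp' hr'.symm, Ctx.trueSlot, dif_pos hsupp',
        if_pos hr'.symm, hU'] at hrd
      exact hrd
    have hrec : ∀ u' ∈ (C.UOf h).erase u,
        (C.Q u').msg t (C.prevOf t u' ts (NOFview (C.πs u ⟨t + 1, ht2⟩) x))
          (C.viewAt (NOFview (C.πs u ⟨t + 1, ht2⟩) x) u' t) = C.mm u' x t := by
      intro u' hu'
      have hu'U : u' ∈ C.UOf h := Finset.mem_of_mem_erase hu'
      have hne : u' ≠ u := Finset.ne_of_mem_erase hu'
      have hpsymm : ((C.πs u).symm (C.πs u ⟨t + 1, ht2⟩) : ℕ) = t + 1 := by simp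
      have hview : ¬ (((C.πs u').symm (C.πs u ⟨t + 1, ht2⟩) : ℕ) < t ∨
          ((C.πs u').symm (C.πs u ⟨t + 1, ht2⟩) : ℕ) = t + 1) := by
        rintro (hlt | heq)
        · exact (hS.1 _ hmem).2.2.2 u' hu'U u humem _ hlt hpsymm
        · exact hne ((hS.1 _ hmem).2.2.1 u' hu'U u humem _ heq hpsymm)
      have hprev' : ∀ t'', t = t'' + 1 → ¬ C.Supp t'' u' := by
        intro t'' ht''
        apply C.prev_unsupp hS (U := C.UOf h) (s := C.sOf h) ?_ hu'U
        rw [← ht'']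
        exact hmem
      have hpre' : C.trueBoard x t <+: ts :=
        (C.trueBoard_prefix x (Nat.le_succ t)).trans hpre
      exact C.Gnorm_correct hS hobl ht hprev' hpre' hview
    calc ((List.range (C.L t)).map fun i =>
            decide ((toZ (((ts.drop (C.slotPos t (C.repOf h))).take (C.L t)).getD i false)
              + ∑ u' ∈ (C.UOf h).erase u,
                  toZ (((C.Q u').msg t
                    (C.prevOf t u' ts (NOFview (C.πs u ⟨t + 1, ht2⟩) x))
                    (C.viewAt (NOFview (C.πs u ⟨t + 1, ht2⟩) x) u' t)).getD i false)) = 1))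
        = (List.range (C.L t)).map (fun i => (C.mm u x t).getD i false) := by
          apply List.map_congr_left
          intro i hi
          have hiL : i < C.L t := List.mem_range.mp hi
          have hsum : (∑ u' ∈ (C.UOf h).erase u,
              toZ (((C.Q u').msg t (C.prevOf t u' ts (NOFview (C.πs u ⟨t + 1, ht2⟩) x))
                (C.viewAt (NOFview (C.πs u ⟨t + 1, ht2⟩) x) u' t)).getD i false))
              = ∑ u' ∈ (C.UOf h).erase u, toZ ((C.mm u' x t).getD i false) :=
            Finset.sum_congr rfl (fun u' hu' => by rw [hrec u' hu'])
          rw [hread, getD_map_range _ hiL, toZ_decide, hsum,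
            ← Finset.add_sum_erase _ _ humem, add_assoc, CharTwo.add_self_eq_zero, add_zero]
          exact decide_toZ _
      _ = C.mm u x t := map_range_getD (C.len_mm hobl ht)
  · rw [dif_neg h]
    have hrd := C.read_slot hS hobl ht hpre (u := u)
    rwa [C.slotLen_of_unsupp h, Ctx.trueSlot, dif_neg h] at hrd

include hS hobl in
lemma Ctx.slot_correct (hk : 0 < k) {t : ℕ} (ht : t < k - 1) {u : Fin ℓ}
    {x : Fin k → XX ℓ n} {ts : List Bool}
    (hpre : C.trueBoard x t <+: ts) :
    C.slotG t u ts (NOFview (C.slotP hk t u) x) = C.trueSlot x t u := by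
  rw [Ctx.slotG, Ctx.slotP, Ctx.trueSlot]
  by_cases h : C.Supp t u
  · rw [dif_pos h, dif_pos h, dif_pos h]
    by_cases hrep : u = C.repOf h
    · rw [if_pos hrep, if_pos hrep]
      have hG : ∀ u' ∈ C.UOf h, C.Gnorm t u' ts (NOFview (C.sOf h) x) = C.mm u' x t := by
        intro u' hu'
        have hpos := (hS.1 _ (C.UOf_spec h).1).2.1 u' hu'
        have hview : ¬ (((C.πs u').symm (C.sOf h) : ℕ) < t ∨
            ((C.πs u').symm (C.sOf h) : ℕ) = t + 1) := by
          rw [hpos]; omega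
        have hprev' : ∀ t'', t = t'' + 1 → ¬ C.Supp t'' u' := by
          intro t'' ht''
          apply C.prev_unsupp hS (U := C.UOf h) (s := C.sOf h) ?_ hu'
          rw [← ht'']
          exact (C.UOf_spec h).1
        exact C.Gnorm_correct hS hobl ht hprev' hpre hview
      apply List.map_congr_left
      intro i _
      rw [Finset.sum_congr rfl (fun u' hu' => by rw [hG u' hu'])]
    · rw [if_neg hrep, if_neg hrep]
  · rw [dif_neg h, dif_neg h, dif_neg h]
    have htk : t < k := by omega
    have hpart : (⟨t % k, Nat.mod_lt _ hk⟩ : Fin k) = ⟨t, htk⟩ :=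
      Fin.ext (by simp [Nat.mod_eq_of_lt htk])
    rw [hpart]
    have hview : ¬ (((C.πs u).symm (C.πs u ⟨t, htk⟩) : ℕ) < t ∨
        ((C.πs u).symm (C.πs u ⟨t, htk⟩) : ℕ) = t + 1) := by
      simp
    have hG : C.Gnorm t u ts (NOFview (C.πs u ⟨t, htk⟩) x) = C.mm u x t := by
      rw [Ctx.Gnorm, C.viewAt_eq hview]
      cases t with
      | zero => rfl
      | succ t' =>
        have hR := C.Rec_correct hS hobl (t := t') (by omega) (by omega) (u := u)
          (x := x) (ts := ts) hpre
        show (C.Q u).msg (t' + 1) (C.Rec t' u ts _) _ = _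
        rw [hR]
        rfl
    rw [hG, padTo_eq (C.len_mm hobl ht)]

end Correct

noncomputable def Ctx.outG (C : Ctx k ℓ n) (u : Fin ℓ) :
    List Bool → (Fin k → Option (XX ℓ n)) → List Bool :=
  fun ts v => [(C.Q u).out (C.Rec (k - 2) u ts v) (C.viewAt v u (k - 1))]

lemma Ctx.out_correct (C : Ctx k ℓ n) (hS : IsRepetitive k ℓ C.πs C.S)
    (hobl : ∀ (u : Fin ℓ) (x : Fin k → (Fin n → Bool)) (t : ℕ), t < k - 1 →
      (myoMsg (C.πs u) (C.Q u) x t).length = C.L t)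
    (hk2 : 2 ≤ k) {f : (Fin k → (Fin n → Bool)) → Bool}
    (hQ : ∀ u, MyoComputes (C.πs u) (C.Q u) f)
    {u : Fin ℓ} {x : Fin k → XX ℓ n} {ts : List Bool}
    (hpre : C.trueBoard x (k - 1) <+: ts) :
    C.outG u ts (NOFview (C.πs u ⟨k - 1, by omega⟩) x) = [f (inst x u)] := by
  rw [Ctx.outG]
  have hts : C.trueBoard x ((k - 2) + 1) <+: ts := by
    rw [show k - 2 + 1 = k - 1 by omega]
    exact hpre
  have hfin : (⟨k - 2 + 1, by omega⟩ : Fin k) = ⟨k - 1, by omega⟩ :=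
    Fin.mk_eq_mk.mpr (by omega)
  have e1 : C.Rec (k - 2) u ts (NOFview (C.πs u ⟨k - 1, by omega⟩) x)
      = C.mm u x (k - 2) := by
    have hR := C.Rec_correct hS hobl (t := k - 2) (by omega) (by omega) (u := u) hts
    rwa [hfin] at hR
  rw [e1]
  have e2 : C.viewAt (NOFview (C.πs u ⟨k - 1, by omega⟩) x) u (k - 1)
      = myoView (C.πs u) (k - 1) (inst x u) := by
    apply C.viewAt_eq
    simp only [Equiv.symm_apply_apply]
    omega
  rw [e2]
  exact congrArg (fun b => [b]) (hQ u (inst x u))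

end NOFSim

namespace NOFSim

open NOFAux

variable {k ℓ n : ℕ}

lemma list_sum_range (m : ℕ) (g : ℕ → ℕ) :
    ((List.range m).map g).sum = ∑ t ∈ Finset.range m, g t := by
  induction m with
  | zero => rfl
  | succ m ih =>
    rw [List.range_succ, List.map_append, List.sum_append, Finset.sum_range_succ, ih]
    simp

lemma flatMap_singletons {α β : Type*} (l : List α) (g : α → β) :
    l.flatMap (fun a => [g a]) = l.map g := by
  induction l with
  | nil => rfl
  | cons a l ih => rw [List.flatMap_cons, ih]; rfl

section Assemble

variable (C : Ctx k ℓ n) (hS : IsRepetitive k ℓ C.πs C.S)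
  (hobl : ∀ (u : Fin ℓ) (x : Fin k → (Fin n → Bool)) (t : ℕ), t < k - 1 →
    (myoMsg (C.πs u) (C.Q u) x t).length = C.L t)

include hS hobl in
lemma Ctx.buildFrom_slots (hk : 0 < k) {t : ℕ} (ht : t < k - 1) (x : Fin k → XX ℓ n) :
    ∀ (us : List (Fin ℓ)) (acc : List Bool), C.trueBoard x t <+: acc →
    buildFrom x (us.map (fun u => (C.slotP hk t u, C.slotG t u))) acc
      = acc ++ us.flatMap (C.trueSlot x t) := by
  intro us
  induction us with
  | nil => intro acc _; simp [buildFrom]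
  | cons u us ih =>
    intro acc hacc
    rw [List.map_cons,
      show buildFrom x ((C.slotP hk t u, C.slotG t u) :: us.map (fun u => (C.slotP hk t u, C.slotG t u))) acc
        = buildFrom x (us.map (fun u => (C.slotP hk t u, C.slotG t u)))
            (acc ++ C.slotG t u acc (NOFview (C.slotP hk t u) x)) from rfl]
    rw [C.slot_correct hS hobl hk ht hacc]
    rw [ih _ (hacc.trans (List.prefix_append _ _))]
    rw [List.flatMap_cons, List.append_assoc]

include hS hobl in
lemma Ctx.msg_board (hk : 0 < k) (x : Fin k → XX ℓ n) : ∀ t, t ≤ k - 1 →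
    buildFrom x ((List.range t).flatMap
        (fun t' => (List.finRange ℓ).map (fun u => (C.slotP hk t' u, C.slotG t' u)))) []
      = C.trueBoard x t := by
  intro t
  induction t with
  | zero => intro _; rfl
  | succ t ih =>
    intro ht
    rw [List.range_succ, List.flatMap_append, buildFrom_append, ih (by omega),
      List.flatMap_singleton]
    rw [C.buildFrom_slots hS hobl hk (by omega) x _ _ List.prefix_rfl, C.trueBoard_succ]
    rfl

include hS hobl in
lemma Ctx.out_board (hk2 : 2 ≤ k) {f : (Fin k → (Fin n → Bool)) → Bool}
    (hQ : ∀ u, MyoComputes (C.πs u) (C.Q u) f) (x : Fin k → XX ℓ n) :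
    ∀ (us : List (Fin ℓ)) (acc : List Bool), C.trueBoard x (k - 1) <+: acc →
    buildFrom x (us.map (fun u => (C.πs u ⟨k - 1, by omega⟩, C.outG u))) acc
      = acc ++ us.flatMap (fun u => [f (inst x u)]) := by
  intro us
  induction us with
  | nil => intro acc _; simp [buildFrom]
  | cons u us ih =>
    intro acc hacc
    rw [List.map_cons,
      show buildFrom x ((C.πs u ⟨k - 1, by omega⟩, C.outG u) ::
            us.map (fun u => (C.πs u ⟨k - 1, by omega⟩, C.outG u))) acc
        = buildFrom x (us.map (fun u => (C.πs u ⟨k - 1, by omega⟩, C.outG u)))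
            (acc ++ C.outG u acc (NOFview (C.πs u ⟨k - 1, by omega⟩) x)) from rfl]
    rw [C.out_correct hS hobl hk2 hQ hacc]
    rw [ih _ (hacc.trans (List.prefix_append _ _))]
    rw [List.flatMap_cons, List.append_assoc]

end Assemble

section Counting

variable (C : Ctx k ℓ n) (hS : IsRepetitive k ℓ C.πs C.S)

open Classical

include hS in
lemma Ctx.stepLen_eq (t : ℕ) :
    C.stepLen t + (∑ σ ∈ C.S.filter (fun σ => σ.1 = t), (σ.2.2.card - 1)) * C.L t
      = ℓ * C.L t := by
  classical
  have h1 : C.stepLen t = ∑ u : Fin ℓ, C.slotLen t u := (Fin.sum_univ_def _).symm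
  have hcards := Finset.card_filter_add_card_filter_not
    (s := (Finset.univ : Finset (Fin ℓ))) (fun u => C.suppNR t u)
  rw [Finset.card_univ, Fintype.card_fin] at hcards
  have h2 : ∑ u : Fin ℓ, C.slotLen t u
      = (ℓ - (Finset.univ.filter (fun u : Fin ℓ => C.suppNR t u)).card) * C.L t := by
    rw [← Finset.sum_filter_add_sum_filter_not Finset.univ (fun u => C.suppNR t u)]
    have e1 : ∑ u ∈ Finset.univ.filter (fun u : Fin ℓ => C.suppNR t u), C.slotLen t u = 0 :=
      Finset.sum_eq_zero (fun u hu => if_pos (Finset.mem_filter.mp hu).2)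
    have e2 : ∑ u ∈ Finset.univ.filter (fun u : Fin ℓ => ¬ C.suppNR t u), C.slotLen t u
        = ((Finset.univ.filter (fun u : Fin ℓ => ¬ C.suppNR t u)).card) * C.L t := by
      have hcg : ∀ u ∈ Finset.univ.filter (fun u : Fin ℓ => ¬ C.suppNR t u),
          C.slotLen t u = C.L t :=
        fun u hu => if_neg (Finset.mem_filter.mp hu).2
      rw [Finset.sum_congr rfl hcg, Finset.sum_const, smul_eq_mul]
    rw [e1, e2, zero_add]
    congr 1
    omega
  have h3 : (Finset.univ.filter (fun u : Fin ℓ => C.suppNR t u)).card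
      = ∑ σ ∈ C.S.filter (fun σ => σ.1 = t), (σ.2.2.card - 1) := by
    have hNReq : Finset.univ.filter (fun u : Fin ℓ => C.suppNR t u)
        = (C.S.filter (fun σ => σ.1 = t)).biUnion
          (fun σ => σ.2.2.filter (fun u => ¬ ∀ u' ∈ σ.2.2, u ≤ u')) := by
      ext u
      constructor
      · intro hu
        obtain ⟨⟨s, U⟩, hm, huU, hnm⟩ := (Finset.mem_filter.mp hu).2
        rw [Finset.mem_biUnion]
        refine ⟨(t, s, U), Finset.mem_filter.mpr ⟨hm, rfl⟩, Finset.mem_filter.mpr ⟨huU, hnm⟩⟩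
      · intro hu
        rw [Finset.mem_biUnion] at hu
        obtain ⟨σ, hσ, huσ⟩ := hu
        obtain ⟨hσS, hσt⟩ := Finset.mem_filter.mp hσ
        obtain ⟨huU, hnm⟩ := Finset.mem_filter.mp huσ
        refine Finset.mem_filter.mpr ⟨Finset.mem_univ _, (σ.2.1, σ.2.2), ?_, huU, hnm⟩
        rw [← hσt]
        exact hσS
    rw [hNReq, Finset.card_biUnion]
    · apply Finset.sum_congr rfl
      intro σ hσ
      rcases Finset.eq_empty_or_nonempty σ.2.2 with he | hne
      · simp [he]
      · have hflt : σ.2.2.filter (fun u => ¬ ∀ u' ∈ σ.2.2, u ≤ u')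
            = σ.2.2.erase (σ.2.2.min' hne) := by
          ext u
          simp only [Finset.mem_filter, Finset.mem_erase]
          constructor
          · rintro ⟨huU, hnm⟩
            refine ⟨fun he' => hnm ?_, huU⟩
            intro u' hu'
            rw [he']
            exact Finset.min'_le _ _ hu'
          · rintro ⟨hne', huU⟩
            refine ⟨huU, fun hmin => hne' ?_⟩
            exact le_antisymm (hmin _ (Finset.min'_mem _ _)) (Finset.min'_le _ _ huU)
        rw [hflt, Finset.card_erase_of_mem (Finset.min'_mem _ _)]
    · intro σ1 h1' σ2 h2' hne
      obtain ⟨h1S, h1t⟩ := Finset.mem_filter.mp h1'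
      obtain ⟨h2S, h2t⟩ := Finset.mem_filter.mp h2'
      rw [Function.onFun, Finset.disjoint_left]
      intro u hu1 hu2
      obtain ⟨hu1U, -⟩ := Finset.mem_filter.mp hu1
      obtain ⟨hu2U, -⟩ := Finset.mem_filter.mp hu2
      have hm1 : (t, σ1.2.1, σ1.2.2) ∈ C.S := by rw [← h1t]; exact h1S
      have hm2 : (t, σ2.2.1, σ2.2.2) ∈ C.S := by rw [← h2t]; exact h2S
      obtain ⟨hs, hU⟩ := C.triplet_unique hS hm1 hm2 hu1U hu2U
      apply hne
      have e1 : σ1 = (σ1.1, σ1.2.1, σ1.2.2) := rfl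
      have e2 : σ2 = (σ2.1, σ2.2.1, σ2.2.2) := rfl
      rw [e1, e2, h1t, h2t, hs, hU]
  have h4 : (Finset.univ.filter (fun u : Fin ℓ => C.suppNR t u)).card ≤ ℓ := by
    calc (Finset.univ.filter (fun u : Fin ℓ => C.suppNR t u)).card
        ≤ (Finset.univ : Finset (Fin ℓ)).card := Finset.card_filter_le _ _
      _ = ℓ := by rw [Finset.card_univ, Fintype.card_fin]
  rw [h1, h2, ← h3, Nat.sub_mul]
  have h5 : (Finset.univ.filter (fun u : Fin ℓ => C.suppNR t u)).card * C.L t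
      ≤ ℓ * C.L t := Nat.mul_le_mul_right _ h4
  omega

include hS in
lemma Ctx.total_len_eq :
    ((List.range (k - 1)).map C.stepLen).sum
      + ∑ σ ∈ C.S, (σ.2.2.card - 1) * C.L σ.1
      = ℓ * ∑ t ∈ Finset.range (k - 1), C.L t := by
  classical
  rw [list_sum_range]
  have hfib : ∑ t ∈ Finset.range (k - 1),
      ∑ σ ∈ C.S.filter (fun σ => σ.1 = t), (σ.2.2.card - 1) * C.L σ.1
      = ∑ σ ∈ C.S, (σ.2.2.card - 1) * C.L σ.1 := by
    apply Finset.sum_fiberwise_of_maps_to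
    intro σ hσ
    have := (hS.1 σ hσ).1
    exact Finset.mem_range.mpr (by omega)
  rw [← hfib, ← Finset.sum_add_distrib, Finset.mul_sum]
  apply Finset.sum_congr rfl
  intro t _
  have hinner : ∑ σ ∈ C.S.filter (fun σ => σ.1 = t), (σ.2.2.card - 1) * C.L σ.1
      = (∑ σ ∈ C.S.filter (fun σ => σ.1 = t), (σ.2.2.card - 1)) * C.L t := by
    rw [Finset.sum_mul]
    apply Finset.sum_congr rfl
    intro σ hσ
    rw [(Finset.mem_filter.mp hσ).2]
  rw [hinner]
  exact C.stepLen_eq hS t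

end Counting

end NOFSim


/-- **Corollary 2 of the paper.**  Let `S` be a `Π`-repetitive set and
let `Q_{π_1},…,Q_{π_ℓ}` be oblivious `MYOPIC_{π_u}` protocols computing `f`, all with
the same communication pattern `L` (the message at step `t` always has length
`L t`).  Then `D^NOF(f^ℓ) ≤ ℓ·C + ℓ − Σ_{(t,s,U)∈S} (|U|−1)·L(t)`, where
`C = Σ_{t} L(t)` is the cost of `Q_{π_1}`. -/
theorem dnof_directSum_le_of_repetitiveSet_oblivious (k ℓ n : ℕ)
    (πs : Fin ℓ → Equiv.Perm (Fin k))
    (f : (Fin k → (Fin n → Bool)) → Bool)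
    (S : Finset (ℕ × Fin k × Finset (Fin ℓ)))
    (hS : IsRepetitive k ℓ πs S)
    (Q : Fin ℓ → MyoProtocol k (Fin n → Bool) Bool)
    (hQ : ∀ u, MyoComputes (πs u) (Q u) f)
    (L : ℕ → ℕ)
    (hobl : ∀ (u : Fin ℓ) (x : Fin k → (Fin n → Bool)) (t : ℕ), t < k - 1 →
      (myoMsg (πs u) (Q u) x t).length = L t) :
    DNOF k (Fin ℓ → Fin n → Bool) (Fin ℓ → Bool) (directSum ℓ f) ≤
      ℓ * (∑ t ∈ Finset.range (k - 1), L t) + ℓ -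
        ∑ s ∈ S, (s.2.2.card - 1) * L s.1 := by
  classical
  rcases Nat.eq_zero_or_pos k with hk0 | hk
  · subst hk0
    have hempty : {c | ∃ P : NOFProtocol 0 (Fin ℓ → Fin n → Bool) (Fin ℓ → Bool),
        P.T = c ∧ NOFComputes P (directSum ℓ f)} = ∅ := by
      ext c
      simp only [Set.mem_setOf_eq, Set.mem_empty_iff_false, iff_false, not_exists]
      rintro P ⟨-, -⟩
      exact (P.speaker []).elim0
    rw [DNOF, hempty, Nat.sInf_empty]
    exact Nat.zero_le _
  rcases Nat.eq_zero_or_pos ℓ with hl0 | hl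
  · subst hl0
    have hcomp : NOFComputes
        (⟨0, fun _ => ⟨0, hk⟩, fun _ _ => false, fun _ _ _ => fun u => u.elim0⟩ :
          NOFProtocol k (Fin 0 → Fin n → Bool) (Fin 0 → Bool)) (directSum 0 f) := by
      intro x i
      funext u
      exact u.elim0
    exact le_trans (Nat.sInf_le ⟨_, rfl, hcomp⟩) (Nat.zero_le _)
  rcases Nat.lt_or_ge k 2 with hk1 | hk2
  · have hk1' : k = 1 := by omega
    subst hk1'
    have hview : ∀ (u : Fin ℓ) (y : Fin 1 → (Fin n → Bool)),
        myoView (πs u) 0 y = fun _ => none := by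
      intro u y
      funext j
      rw [myoView, if_neg]
      have := ((πs u).symm j).isLt
      omega
    have hcomp : NOFComputes
        (⟨0, fun _ => ⟨0, hk⟩, fun _ _ => false,
          fun _ _ _ => fun u => (Q u).out ((Q u).msg 0 [] (fun _ => none)) (fun _ => none)⟩ :
          NOFProtocol 1 (Fin ℓ → Fin n → Bool) (Fin ℓ → Bool)) (directSum ℓ f) := by
      intro x i
      funext u
      show (Q u).out ((Q u).msg 0 [] (fun _ => none)) (fun _ => none) = f (fun j => x j u)
      have h' : (Q u).out (myoMsg (πs u) (Q u) (fun j => x j u) 0)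
          (myoView (πs u) 0 (fun j => x j u)) = f (fun j => x j u) := hQ u (fun j => x j u)
      have e0 : myoMsg (πs u) (Q u) (fun j => x j u) 0
          = (Q u).msg 0 [] (fun _ => none) := by
        show (Q u).msg 0 [] (myoView (πs u) 0 (fun j => x j u)) = _
        rw [hview u]
      rw [e0, hview u] at h'
      exact h'
    exact le_trans (Nat.sInf_le ⟨_, rfl, hcomp⟩) (Nat.zero_le _)
  -- main case: k ≥ 2, ℓ ≥ 1
  set C : NOFSim.Ctx k ℓ n := ⟨πs, Q, S, L⟩ with hC
  have hS' : IsRepetitive k ℓ C.πs C.S := hS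
  have hobl' : ∀ (u : Fin ℓ) (x : Fin k → (Fin n → Bool)) (t : ℕ), t < k - 1 →
      (myoMsg (C.πs u) (C.Q u) x t).length = C.L t := hobl
  have hQ' : ∀ u, MyoComputes (C.πs u) (C.Q u) f := hQ
  set msgR : List (NOFAux.Rnd k (NOFSim.XX ℓ n)) :=
    (List.range (k - 1)).flatMap
      (fun t' => (List.finRange ℓ).map (fun u => (C.slotP hk t' u, C.slotG t' u))) with hmsgR
  set outR : List (NOFAux.Rnd k (NOFSim.XX ℓ n)) :=
    (List.finRange ℓ).map (fun u => (C.πs u ⟨k - 1, by omega⟩, C.outG u)) with houtR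
  have hboard : ∀ x : Fin k → NOFSim.XX ℓ n,
      NOFAux.buildFrom x (msgR ++ outR) []
        = C.trueBoard x (k - 1)
          ++ (List.finRange ℓ).map (fun u => f (NOFSim.inst x u)) := by
    intro x
    rw [NOFAux.buildFrom_append, hmsgR, houtR,
      C.msg_board hS' hobl' hk x (k - 1) le_rfl,
      C.out_board hS' hobl' hk2 hQ' x _ _ List.prefix_rfl,
      NOFSim.flatMap_singletons]
  have hlen : ∀ r ∈ msgR ++ outR, ∃ c, ∀ a v, (r.2 a v).length = c := by
    intro r hr
    rw [List.mem_append] at hr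
    rcases hr with hr | hr
    · rw [hmsgR, List.mem_flatMap] at hr
      obtain ⟨t, -, hr⟩ := hr
      rw [List.mem_map] at hr
      obtain ⟨u, -, rfl⟩ := hr
      show ∃ c, ∀ a v, (C.slotG t u a v).length = c
      rw [NOFSim.Ctx.slotG]
      by_cases h : C.Supp t u
      · rw [dif_pos h]
        by_cases hrep : u = C.repOf h
        · rw [if_pos hrep]
          exact ⟨C.L t, fun a v => by simp⟩
        · rw [if_neg hrep]
          exact ⟨0, fun a v => rfl⟩
      · rw [dif_neg h]
        exact ⟨C.L t, fun a v => NOFSim.padTo_length _ _⟩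
    · rw [houtR, List.mem_map] at hr
      obtain ⟨u, -, rfl⟩ := hr
      exact ⟨1, fun a v => rfl⟩
  obtain ⟨T, spk, nxt, hT, hrun⟩ :=
    NOFAux.exists_run (O := Fin ℓ → Bool) ⟨0, by omega⟩ (msgR ++ outR) hlen
  set M := ((List.range (k - 1)).map C.stepLen).sum with hM
  set outf : Fin k → List Bool → (Fin k → Option (NOFSim.XX ℓ n)) → (Fin ℓ → Bool) :=
    fun _ ts _ => fun u => ts.getD (M + u) false with houtf
  have hcomp : NOFComputes (⟨T, spk, nxt, outf⟩ :
      NOFProtocol k (Fin ℓ → Fin n → Bool) (Fin ℓ → Bool)) (directSum ℓ f) := by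
    intro x i
    show outf i (NOFrun ⟨T, spk, nxt, outf⟩ x T) (NOFview i x) = directSum ℓ f x
    rw [hrun outf x, hboard x]
    funext u
    have hMlen : (C.trueBoard x (k - 1)).length = M := C.len_trueBoard hS' hobl' le_rfl
    show (C.trueBoard x (k - 1)
        ++ (List.finRange ℓ).map (fun u => f (NOFSim.inst x u))).getD (M + u) false
      = directSum ℓ f x u
    rw [List.getD_eq_getElem?_getD,
      List.getElem?_append_right (by rw [hMlen]; omega), hMlen]
    have hidx : M + (u : ℕ) - M = (u : ℕ) := by omega
    rw [hidx]
    have hul : (u : ℕ) < ((List.finRange ℓ).map (fun u => f (NOFSim.inst x u))).length := by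
      rw [List.length_map, List.length_finRange]
      exact u.isLt
    rw [List.getElem?_eq_getElem hul]
    simp only [List.getElem_map, List.getElem_finRange, Option.getD_some]
    rfl
  have hTval : T = M + ℓ := by
    have h0 := hT (fun _ => fun _ _ => false)
    rw [hboard _, List.length_append, C.len_trueBoard hS' hobl' le_rfl,
      List.length_map, List.length_finRange] at h0
    omega
  have harith : M + ∑ σ ∈ S, (σ.2.2.card - 1) * L σ.1
      = ℓ * ∑ t ∈ Finset.range (k - 1), L t := C.total_len_eq hS'
  have hmemb : T ∈ {c | ∃ P : NOFProtocol k (Fin ℓ → Fin n → Bool) (Fin ℓ → Bool),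
      P.T = c ∧ NOFComputes P (directSum ℓ f)} := ⟨_, rfl, hcomp⟩
  exact le_trans (Nat.sInf_le hmemb) (by omega)
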